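/- arXiv:1712.05619 — 3 statements merged into one kernel-verified Lean document; each statement's English description precedes it below -/
import Mathlib

section
/- Let A be an associative k-algebra with a double bracket {{-,-}}. Then the associated bracket {a,b} = m({{a,b}}) vanishes on commutators in its first argument: for all a, b, c in A, {ab - ba, c} = 0. -/
open TensorProduct

lemma aux_mul_comm_swap (k : Type*) [Field k] (A : Type*) [Ring A] [Algebra k A]
    (a : A) (t : A ⊗[k] A) :
    LinearMap.mul' k A ((TensorProduct.comm k A A)
      (LinearMap.rTensor A (LinearMap.mulLeft k a) t)) =
    LinearMap.mul' k A ((TensorProduct.comm k A A)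
      (LinearMap.lTensor A (LinearMap.mulRight k a) t)) := by
  induction t using TensorProduct.induction_on with
  | zero => simp
  | tmul x y => simp [mul_assoc]
  | add u v hu hv => simp [map_add, hu, hv]

/-- the associated bracket of a double bracket vanishes on
commutators in its first argument. -/
theorem double_bracket_assoc_bracket_vanishes_on_commutators
    (k : Type*) [Field k] [CharZero k]
    (A : Type*) [Ring A] [Algebra k A]
    (db : A →ₗ[k] A →ₗ[k] A ⊗[k] A)
    (hder : ∀ a b c : A, db a (b * c) =
      LinearMap.rTensor A (LinearMap.mulLeft k b) (db a c)
        + LinearMap.lTensor A (LinearMap.mulRight k c) (db a b))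
    (hskew : ∀ a b : A, db a b = - (TensorProduct.comm k A A) (db b a)) :
    ∀ a b c : A, LinearMap.mul' k A (db (a * b - b * a) c) = 0 := by
  intro a b c
  rw [hskew (a * b - b * a) c, map_sub, hder c a b, hder c b a]
  simp only [map_add, map_sub, map_neg]
  rw [aux_mul_comm_swap k A a (db c b), aux_mul_comm_swap k A b (db c a)]
  abel
end

section
/- Let A be a double Poisson algebra, i.e. a double bracket {{-,-}} whose triple bracket {{a,b,c}} = {{a,{{b,c}}}}_L + τ_(123){{b,{{c,a}}}}_L + τ_(132){{c,{{a,b}}}}_L vanishes identically. Then the associated bracket {a,b} = m({{a,b}}) makes A into a left Loday algebra: {a,{b,c}} = {{a,b},c} + {b,{a,c}} for all a,b,c ∈ A. -/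
set_option synthInstance.maxHeartbeats 400000
set_option maxHeartbeats 1000000
set_option linter.unusedSectionVars false


open TensorProduct

variable (k : Type*) [Field k] [CharZero k] (A : Type*) [Ring A] [Algebra k A]

/-- `{{a, x ⊗ y}}_L = {{a,x}} ⊗ y`, reassociated into `A ⊗ (A ⊗ A)`. -/
noncomputable def brL (db : A →ₗ[k] A →ₗ[k] A ⊗[k] A) (a : A) :
    A ⊗[k] A →ₗ[k] A ⊗[k] (A ⊗[k] A) :=
  (TensorProduct.assoc k A A A).toLinearMap ∘ₗ LinearMap.rTensor A (db a)

/-- the cyclic permutation `τ_(123) : x ⊗ y ⊗ z ↦ z ⊗ x ⊗ y`. -/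
noncomputable def cyc : A ⊗[k] (A ⊗[k] A) →ₗ[k] A ⊗[k] (A ⊗[k] A) :=
  (TensorProduct.comm k (A ⊗[k] A) A).toLinearMap ∘ₗ
    (TensorProduct.assoc k A A A).symm.toLinearMap

/-- the triple bracket associated to a double bracket. -/
noncomputable def tripleBr (db : A →ₗ[k] A →ₗ[k] A ⊗[k] A) (a b c : A) :
    A ⊗[k] (A ⊗[k] A) :=
  brL k A db a (db b c) + cyc k A (brL k A db b (db c a))
    + cyc k A (cyc k A (brL k A db c (db a b)))

/-! ### Auxiliary material for the proof -/

/-- triple multiplication `x ⊗ (y ⊗ z) ↦ x * (y * z)`. -/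
noncomputable def m3 : A ⊗[k] (A ⊗[k] A) →ₗ[k] A :=
  LinearMap.mul' k A ∘ₗ LinearMap.lTensor A (LinearMap.mul' k A)

lemma mulL_aux (x : A) (t : A ⊗[k] A) :
    LinearMap.mul' k A (LinearMap.rTensor A (LinearMap.mulLeft k x) t)
      = x * LinearMap.mul' k A t := by
  induction t using TensorProduct.induction_on with
  | zero => simp
  | tmul p q => simp [mul_assoc]
  | add u v hu hv => simp [hu, hv, mul_add]

lemma mulR_aux (y : A) (t : A ⊗[k] A) :
    LinearMap.mul' k A (LinearMap.lTensor A (LinearMap.mulRight k y) t)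
      = LinearMap.mul' k A t * y := by
  induction t using TensorProduct.induction_on with
  | zero => simp
  | tmul p q => simp [mul_assoc]
  | add u v hu hv => simp [hu, hv, add_mul]

lemma E1_aux (y : A) (t : A ⊗[k] A) :
    m3 k A ((TensorProduct.assoc k A A A) (t ⊗ₜ[k] y))
      = LinearMap.mul' k A t * y := by
  induction t using TensorProduct.induction_on with
  | zero => simp
  | tmul p q => simp [m3, mul_assoc]
  | add u v hu hv => simp [add_tmul, hu, hv, add_mul]

lemma E2_aux (y : A) (t : A ⊗[k] A) :
    m3 k A (cyc k A ((TensorProduct.assoc k A A A) (t ⊗ₜ[k] y)))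
      = y * LinearMap.mul' k A t := by
  induction t using TensorProduct.induction_on with
  | zero => simp
  | tmul p q => simp [m3, cyc, mul_assoc]
  | add u v hu hv => simp [add_tmul, hu, hv, mul_add]

lemma E3_aux (y : A) (t : A ⊗[k] A) :
    m3 k A (cyc k A (cyc k A ((TensorProduct.assoc k A A A) (t ⊗ₜ[k] y))))
      = LinearMap.mul' k A ((TensorProduct.comm k A A)
          (LinearMap.lTensor A (LinearMap.mulRight k y) t)) := by
  induction t using TensorProduct.induction_on with
  | zero => simp
  | tmul p q => simp [m3, cyc, mul_assoc]
  | add u v hu hv => simp [add_tmul, hu, hv]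

lemma E3'_aux (x : A) (t : A ⊗[k] A) :
    LinearMap.mul' k A ((TensorProduct.comm k A A)
        (LinearMap.rTensor A (LinearMap.mulLeft k x) t))
      = LinearMap.mul' k A ((TensorProduct.comm k A A)
        (LinearMap.lTensor A (LinearMap.mulRight k x) t)) := by
  induction t using TensorProduct.induction_on with
  | zero => simp
  | tmul p q => simp [mul_assoc]
  | add u v hu hv => simp [hu, hv]

lemma G2_aux (g : A →ₗ[k] A) (w : A ⊗[k] A) :
    LinearMap.mul' k A ((TensorProduct.comm k A A)
        (LinearMap.rTensor A g ((TensorProduct.comm k A A) w)))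
      = LinearMap.mul' k A (LinearMap.lTensor A g w) := by
  induction w using TensorProduct.induction_on with
  | zero => simp
  | tmul p q => simp
  | add u v hu hv => simp [hu, hv]

lemma TL_aux (db : A →ₗ[k] A →ₗ[k] A ⊗[k] A) (a : A) (w : A ⊗[k] A) :
    m3 k A (brL k A db a w)
      = LinearMap.mul' k A
          (LinearMap.rTensor A (LinearMap.mul' k A ∘ₗ db a) w) := by
  induction w using TensorProduct.induction_on with
  | zero => simp
  | tmul x y => simp [brL, E1_aux]
  | add u v hu hv => simp [hu, hv]

lemma TN_aux (db : A →ₗ[k] A →ₗ[k] A ⊗[k] A) (b : A) (w : A ⊗[k] A) :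
    m3 k A (cyc k A (brL k A db b w))
      = LinearMap.mul' k A ((TensorProduct.comm k A A)
          (LinearMap.rTensor A (LinearMap.mul' k A ∘ₗ db b) w)) := by
  induction w using TensorProduct.induction_on with
  | zero => simp
  | tmul x y => simp [brL, E2_aux]
  | add u v hu hv => simp [hu, hv]

/-- derivation property of the associated bracket. -/
lemma KEY1_aux (db : A →ₗ[k] A →ₗ[k] A ⊗[k] A)
    (hder : ∀ a b c : A, db a (b * c) =
      LinearMap.rTensor A (LinearMap.mulLeft k b) (db a c)
        + LinearMap.lTensor A (LinearMap.mulRight k c) (db a b))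
    (a : A) (w : A ⊗[k] A) :
    LinearMap.mul' k A (db a (LinearMap.mul' k A w))
      = LinearMap.mul' k A (LinearMap.rTensor A (LinearMap.mul' k A ∘ₗ db a) w)
        + LinearMap.mul' k A (LinearMap.lTensor A (LinearMap.mul' k A ∘ₗ db a) w) := by
  induction w using TensorProduct.induction_on with
  | zero => simp
  | tmul x y =>
      simp only [LinearMap.mul'_apply, hder a x y, map_add, mulL_aux, mulR_aux,
        LinearMap.rTensor_tmul, LinearMap.lTensor_tmul, LinearMap.comp_apply]
      abel
  | add u v hu hv => simp only [map_add, hu, hv]; abel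

/-- behaviour of the associated bracket in the first slot. -/
lemma KEY3_aux (db : A →ₗ[k] A →ₗ[k] A ⊗[k] A)
    (hder : ∀ a b c : A, db a (b * c) =
      LinearMap.rTensor A (LinearMap.mulLeft k b) (db a c)
        + LinearMap.lTensor A (LinearMap.mulRight k c) (db a b))
    (hskew : ∀ a b : A, db a b = - (TensorProduct.comm k A A) (db b a))
    (c : A) (w : A ⊗[k] A) :
    LinearMap.mul' k A (db (LinearMap.mul' k A w) c)
      = -(m3 k A (cyc k A (cyc k A (brL k A db c w)))
          + m3 k A (cyc k A (cyc k A (brL k A db c ((TensorProduct.comm k A A) w))))) := by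
  induction w using TensorProduct.induction_on with
  | zero => simp
  | tmul r s =>
      have h1 : LinearMap.mul' k A (db (r * s) c)
          = -(LinearMap.mul' k A ((TensorProduct.comm k A A)
                (LinearMap.rTensor A (LinearMap.mulLeft k r) (db c s)))
            + LinearMap.mul' k A ((TensorProduct.comm k A A)
                (LinearMap.lTensor A (LinearMap.mulRight k s) (db c r)))) := by
        rw [hskew (r * s) c, hder c r s]
        simp [map_add]
      rw [LinearMap.mul'_apply, h1]
      simp only [brL, LinearMap.coe_comp, Function.comp_apply, LinearEquiv.coe_coe,
        LinearMap.rTensor_tmul, TensorProduct.comm_tmul, E3_aux, E3'_aux]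
      abel
  | add u v hu hv =>
      simp only [map_add, LinearMap.add_apply, hu, hv]
      abel

/-- on a double Poisson algebra, the associated bracket makes `A`
into a left Loday algebra. -/
theorem double_poisson_assoc_bracket_loday
    (db : A →ₗ[k] A →ₗ[k] A ⊗[k] A)
    (hder : ∀ a b c : A, db a (b * c) =
      LinearMap.rTensor A (LinearMap.mulLeft k b) (db a c)
        + LinearMap.lTensor A (LinearMap.mulRight k c) (db a b))
    (hskew : ∀ a b : A, db a b = - (TensorProduct.comm k A A) (db b a))
    (hpoisson : ∀ a b c : A, tripleBr k A db a b c = 0) :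
    ∀ a b c : A,
      LinearMap.mul' k A (db a (LinearMap.mul' k A (db b c))) =
        LinearMap.mul' k A (db (LinearMap.mul' k A (db a b)) c)
          + LinearMap.mul' k A (db b (LinearMap.mul' k A (db a c))) := by
  intro a b c
  have h1 := congrArg (m3 k A) (hpoisson a b c)
  have h2 := congrArg (m3 k A) (hpoisson b a c)
  simp only [tripleBr, map_add, map_zero] at h1 h2
  rw [TL_aux, TN_aux, hskew c a] at h1
  rw [TL_aux, TN_aux, hskew c b] at h2
  simp only [map_neg, G2_aux] at h1 h2
  rw [hskew b a] at h2
  simp only [map_neg] at h2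
  rw [KEY1_aux k A db hder a (db b c), KEY1_aux k A db hder b (db a c),
    KEY3_aux k A db hder hskew c (db a b)]
  linear_combination (norm := abel) h1 - h2
end

section
/- Let A be a double Poisson algebra with associated bracket {a,b} = m({{a,b}}). Then {-,-} descends to a well-defined Lie bracket on the quotient vector space A/[A,A], i.e. the induced bracket is well-defined, antisymmetric, and satisfies the Jacobi identity. -/
open TensorProduct

variable (k : Type*) [Field k] [CharZero k] (A : Type*) [Ring A] [Algebra k A]

/-- full multiplication `x ⊗ y ⊗ z ↦ x y z`. -/
noncomputable def Mm : A ⊗[k] (A ⊗[k] A) →ₗ[k] A :=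
  LinearMap.mul' k A ∘ₗ LinearMap.lTensor A (LinearMap.mul' k A)

/-- the span of commutators. -/
def Cm : Submodule k A := Submodule.span k {x : A | ∃ p q : A, x = p * q - q * p}

variable {k A}

lemma comm_mem (p q : A) : p * q - q * p ∈ Cm k A :=
  Submodule.subset_span ⟨p, q, rfl⟩

lemma Mm_tmul (x y z : A) : Mm k A (x ⊗ₜ (y ⊗ₜ z)) = x * (y * z) := by
  simp [Mm]

lemma cyc_tmul (x y z : A) : cyc k A (x ⊗ₜ[k] (y ⊗ₜ[k] z)) = z ⊗ₜ (x ⊗ₜ y) := by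
  simp [cyc]

lemma triple_induction {P : A ⊗[k] (A ⊗[k] A) → Prop}
    (zero : P 0)
    (tmul : ∀ x y z : A, P (x ⊗ₜ (y ⊗ₜ z)))
    (add : ∀ w₁ w₂, P w₁ → P w₂ → P (w₁ + w₂)) (w : A ⊗[k] (A ⊗[k] A)) : P w := by
  induction w using TensorProduct.induction_on with
  | zero => exact zero
  | tmul x t =>
    induction t using TensorProduct.induction_on with
    | zero => simpa [TensorProduct.tmul_zero] using zero
    | tmul y z => exact tmul x y z
    | add t₁ t₂ h₁ h₂ => rw [TensorProduct.tmul_add]; exact add _ _ h₁ h₂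
  | add w₁ w₂ h₁ h₂ => exact add _ _ h₁ h₂

lemma cyc_cyc_cyc (w : A ⊗[k] (A ⊗[k] A)) : cyc k A (cyc k A (cyc k A w)) = w := by
  induction w using triple_induction with
  | zero => simp
  | tmul x y z => rw [cyc_tmul, cyc_tmul, cyc_tmul]
  | add w₁ w₂ h₁ h₂ => rw [map_add, map_add, map_add, h₁, h₂]

lemma D_mem (w : A ⊗[k] (A ⊗[k] A)) : Mm k A w - Mm k A (cyc k A w) ∈ Cm k A := by
  induction w using triple_induction with
  | zero => simpa using zero_mem (Cm k A)
  | tmul x y z =>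
    rw [cyc_tmul, Mm_tmul, Mm_tmul]
    simpa [mul_assoc] using comm_mem (x * y) z
  | add w₁ w₂ h₁ h₂ =>
    simp only [map_add]
    rw [add_sub_add_comm]
    exact add_mem h₁ h₂

lemma mul'_comm_sub_mem (t : A ⊗[k] A) :
    LinearMap.mul' k A t - LinearMap.mul' k A ((TensorProduct.comm k A A) t) ∈ Cm k A := by
  induction t using TensorProduct.induction_on with
  | zero => simpa using zero_mem (Cm k A)
  | tmul x y => simpa using comm_mem x y
  | add t₁ t₂ h₁ h₂ =>
    simp only [map_add]
    rw [add_sub_add_comm]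
    exact add_mem h₁ h₂

lemma mul'_rT (p : A) (t : A ⊗[k] A) :
    LinearMap.mul' k A (LinearMap.rTensor A (LinearMap.mulLeft k p) t)
      = p * LinearMap.mul' k A t := by
  induction t using TensorProduct.induction_on with
  | zero => simp
  | tmul x y => simp [mul_assoc]
  | add t₁ t₂ h₁ h₂ => simp only [map_add, h₁, h₂, mul_add]

lemma mul'_lT (q : A) (t : A ⊗[k] A) :
    LinearMap.mul' k A (LinearMap.lTensor A (LinearMap.mulRight k q) t)
      = LinearMap.mul' k A t * q := by
  induction t using TensorProduct.induction_on with
  | zero => simp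
  | tmul x y => simp [mul_assoc]
  | add t₁ t₂ h₁ h₂ => simp only [map_add, h₁, h₂, add_mul]

section withDb
variable (db : A →ₗ[k] A →ₗ[k] A ⊗[k] A)

lemma anti_mem (hskew : ∀ a b : A, db a b = - (TensorProduct.comm k A A) (db b a))
    (x y : A) :
    LinearMap.mul' k A (db x y) + LinearMap.mul' k A (db y x) ∈ Cm k A := by
  have e : LinearMap.mul' k A (db x y) + LinearMap.mul' k A (db y x)
      = LinearMap.mul' k A (db y x)
        - LinearMap.mul' k A ((TensorProduct.comm k A A) (db y x)) := by
    rw [hskew x y, map_neg]; abel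
  rw [e]
  exact mul'_comm_sub_mem _

lemma bracket_comm_right
    (hder : ∀ a b c : A, db a (b * c) =
      LinearMap.rTensor A (LinearMap.mulLeft k b) (db a c)
        + LinearMap.lTensor A (LinearMap.mulRight k c) (db a b))
    (b p q : A) :
    LinearMap.mul' k A (db b (p * q - q * p)) ∈ Cm k A := by
  have e : LinearMap.mul' k A (db b (p * q - q * p))
      = (p * LinearMap.mul' k A (db b q) - LinearMap.mul' k A (db b q) * p)
        + (LinearMap.mul' k A (db b p) * q - q * LinearMap.mul' k A (db b p)) := by
    rw [map_sub, map_sub, hder b p q, hder b q p, map_add, map_add,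
      mul'_rT, mul'_rT, mul'_lT, mul'_lT]
    abel
  rw [e]
  exact add_mem (comm_mem _ _) (comm_mem _ _)

lemma bracket_span_right
    (hder : ∀ a b c : A, db a (b * c) =
      LinearMap.rTensor A (LinearMap.mulLeft k b) (db a c)
        + LinearMap.lTensor A (LinearMap.mulRight k c) (db a b))
    (b v : A) (hv : v ∈ Cm k A) :
    LinearMap.mul' k A (db b v) ∈ Cm k A := by
  have hle : Cm k A ≤ Submodule.comap (LinearMap.mul' k A ∘ₗ db b) (Cm k A) := by
    rw [Cm, Submodule.span_le]
    rintro x ⟨p, q, rfl⟩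
    simpa [Cm] using bracket_comm_right db hder b p q
  simpa using hle hv

lemma Mm_assoc_tmul (s : A ⊗[k] A) (v : A) :
    Mm k A ((TensorProduct.assoc k A A A) (s ⊗ₜ v)) = LinearMap.mul' k A s * v := by
  induction s using TensorProduct.induction_on with
  | zero => rw [TensorProduct.zero_tmul, LinearEquiv.map_zero]; simp
  | tmul x y => simp [Mm, mul_assoc]
  | add s₁ s₂ h₁ h₂ => rw [TensorProduct.add_tmul, map_add, map_add, h₁, h₂, map_add, add_mul]

lemma Mm_cyc_assoc_tmul (s : A ⊗[k] A) (v : A) :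
    Mm k A (cyc k A ((TensorProduct.assoc k A A A) (s ⊗ₜ v)))
      = v * LinearMap.mul' k A s := by
  induction s using TensorProduct.induction_on with
  | zero => rw [TensorProduct.zero_tmul, LinearEquiv.map_zero]; simp
  | tmul x y => rw [TensorProduct.assoc_tmul, cyc_tmul, Mm_tmul]; simp
  | add s₁ s₂ h₁ h₂ =>
    rw [TensorProduct.add_tmul, map_add, map_add, map_add, h₁, h₂, map_add, mul_add]

lemma muldb_mul'
    (hder : ∀ a b c : A, db a (b * c) =
      LinearMap.rTensor A (LinearMap.mulLeft k b) (db a c)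
        + LinearMap.lTensor A (LinearMap.mulRight k c) (db a b))
    (a : A) (t : A ⊗[k] A) :
    LinearMap.mul' k A (db a (LinearMap.mul' k A t))
      = Mm k A (brL k A db a t)
        + LinearMap.mul' k A
            (LinearMap.lTensor A (LinearMap.mul' k A ∘ₗ db a) t) := by
  induction t using TensorProduct.induction_on with
  | zero => simp
  | tmul u v =>
    have h1 : Mm k A (brL k A db a (u ⊗ₜ[k] v)) = LinearMap.mul' k A (db a u) * v := by
      simp only [brL, LinearMap.coe_comp, Function.comp_apply, LinearMap.rTensor_tmul,
        LinearEquiv.coe_coe]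
      exact Mm_assoc_tmul _ _
    rw [LinearMap.mul'_apply, hder a u v, map_add, mul'_rT, mul'_lT, h1,
      LinearMap.lTensor_tmul, LinearMap.mul'_apply, LinearMap.comp_apply]
    abel
  | add t₁ t₂ h₁ h₂ => simp only [map_add, h₁, h₂]; abel

lemma Ea_comm (a : A) (t : A ⊗[k] A) :
    LinearMap.mul' k A (LinearMap.lTensor A (LinearMap.mul' k A ∘ₗ db a)
      ((TensorProduct.comm k A A) t)) = Mm k A (cyc k A (brL k A db a t)) := by
  induction t using TensorProduct.induction_on with
  | zero => simp
  | tmul w z =>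
    have h1 : Mm k A (cyc k A (brL k A db a (w ⊗ₜ[k] z)))
        = z * LinearMap.mul' k A (db a w) := by
      simp only [brL, LinearMap.coe_comp, Function.comp_apply, LinearMap.rTensor_tmul,
        LinearEquiv.coe_coe]
      exact Mm_cyc_assoc_tmul _ _
    rw [h1, TensorProduct.comm_tmul, LinearMap.lTensor_tmul, LinearMap.mul'_apply,
      LinearMap.comp_apply]
  | add t₁ t₂ h₁ h₂ => simp only [map_add, h₁, h₂]

lemma jac_term
    (hder : ∀ a b c : A, db a (b * c) =
      LinearMap.rTensor A (LinearMap.mulLeft k b) (db a c)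
        + LinearMap.lTensor A (LinearMap.mulRight k c) (db a b))
    (hskew : ∀ a b : A, db a b = - (TensorProduct.comm k A A) (db b a))
    (a b c : A) :
    LinearMap.mul' k A (db a (LinearMap.mul' k A (db b c)))
      = Mm k A (brL k A db a (db b c))
        - Mm k A (cyc k A (brL k A db a (db c b))) := by
  rw [muldb_mul' db hder a (db b c)]
  have e2 : LinearMap.mul' k A
      (LinearMap.lTensor A (LinearMap.mul' k A ∘ₗ db a) (db b c))
      = - Mm k A (cyc k A (brL k A db a (db c b))) := by
    rw [hskew b c, map_neg, map_neg, Ea_comm]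
  rw [e2, sub_eq_add_neg]

end withDb

variable (k A)

/-- on a double Poisson algebra, the associated bracket
`{a,b} = m({{a,b}})` descends to a well-defined Lie bracket on `A/[A,A]`. -/
theorem double_poisson_assoc_bracket_lie_on_quotient
    (db : A →ₗ[k] A →ₗ[k] A ⊗[k] A)
    (hder : ∀ a b c : A, db a (b * c) =
      LinearMap.rTensor A (LinearMap.mulLeft k b) (db a c)
        + LinearMap.lTensor A (LinearMap.mulRight k c) (db a b))
    (hskew : ∀ a b : A, db a b = - (TensorProduct.comm k A A) (db b a))
    (hpoisson : ∀ a b c : A, tripleBr k A db a b c = 0) :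
    (∀ a a' b : A,
      a - a' ∈ Submodule.span k {x : A | ∃ p q : A, x = p * q - q * p} →
      LinearMap.mul' k A (db a b) - LinearMap.mul' k A (db a' b) ∈
        Submodule.span k {x : A | ∃ p q : A, x = p * q - q * p} ∧
      LinearMap.mul' k A (db b a) - LinearMap.mul' k A (db b a') ∈
        Submodule.span k {x : A | ∃ p q : A, x = p * q - q * p}) ∧
    (∀ a b : A,
      LinearMap.mul' k A (db a b) + LinearMap.mul' k A (db b a) ∈
        Submodule.span k {x : A | ∃ p q : A, x = p * q - q * p}) ∧
    (∀ a b c : A,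
      LinearMap.mul' k A (db a (LinearMap.mul' k A (db b c)))
        + LinearMap.mul' k A (db b (LinearMap.mul' k A (db c a)))
        + LinearMap.mul' k A (db c (LinearMap.mul' k A (db a b))) ∈
        Submodule.span k {x : A | ∃ p q : A, x = p * q - q * p}) := by
  refine ⟨?_, ?_, ?_⟩
  · -- well-definedness
    intro a a' b h
    have h' : a - a' ∈ Cm k A := h
    have h2 : LinearMap.mul' k A (db b a) - LinearMap.mul' k A (db b a') ∈ Cm k A := by
      rw [← map_sub, ← map_sub (db b)]
      exact bracket_span_right db hder b _ h'
    have h1 : LinearMap.mul' k A (db a b) - LinearMap.mul' k A (db a' b) ∈ Cm k A := by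
      have e : LinearMap.mul' k A (db a b) - LinearMap.mul' k A (db a' b)
          = LinearMap.mul' k A (db (a - a') b) := by
        rw [map_sub db, LinearMap.sub_apply, map_sub]
      rw [e]
      have hanti := anti_mem db hskew (a - a') b
      have hb : LinearMap.mul' k A (db b (a - a')) ∈ Cm k A :=
        bracket_span_right db hder b _ h'
      have := sub_mem hanti hb
      simpa using this
    exact ⟨h1, h2⟩
  · -- antisymmetry
    intro a b
    exact anti_mem db hskew a b
  · -- Jacobi
    intro a b c
    have hJ1 := jac_term db hder hskew a b c
    have hJ2 := jac_term db hder hskew b c a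
    have hJ3 := jac_term db hder hskew c a b
    set P := brL k A db b (db c a) with hP
    set Q := brL k A db c (db a b) with hQ
    set S := brL k A db c (db b a) with hS
    set T := brL k A db b (db a c) with hT
    have hX : Mm k A (tripleBr k A db a b c) = 0 := by rw [hpoisson a b c, map_zero]
    have hY : Mm k A (cyc k A (tripleBr k A db a c b)) = 0 := by
      rw [hpoisson a c b, map_zero, map_zero]
    have key : LinearMap.mul' k A (db a (LinearMap.mul' k A (db b c)))
        + LinearMap.mul' k A (db b (LinearMap.mul' k A (db c a)))
        + LinearMap.mul' k A (db c (LinearMap.mul' k A (db a b)))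
        = Mm k A (tripleBr k A db a b c) - Mm k A (cyc k A (tripleBr k A db a c b))
          + ((Mm k A P - Mm k A (cyc k A P))
            + (Mm k A Q - Mm k A (cyc k A Q))
            + (Mm k A (cyc k A Q) - Mm k A (cyc k A (cyc k A Q)))
            + (Mm k A T - Mm k A (cyc k A T))
            - (Mm k A (cyc k A S) - Mm k A (cyc k A (cyc k A S)))) := by
      rw [hJ1, hJ2, hJ3]
      simp only [tripleBr, map_add, ← hP, ← hQ, ← hS, ← hT]
      rw [cyc_cyc_cyc]
      abel
    rw [key, hX, hY]
    have hmem : (0 : A) - 0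
        + ((Mm k A P - Mm k A (cyc k A P))
          + (Mm k A Q - Mm k A (cyc k A Q))
          + (Mm k A (cyc k A Q) - Mm k A (cyc k A (cyc k A Q)))
          + (Mm k A T - Mm k A (cyc k A T))
          - (Mm k A (cyc k A S) - Mm k A (cyc k A (cyc k A S)))) ∈ Cm k A := by
      refine add_mem (by simpa using zero_mem (Cm k A)) ?_
      exact sub_mem (add_mem (add_mem (add_mem (D_mem P) (D_mem Q)) (D_mem _)) (D_mem T))
        (D_mem _)
    exact hmem
end
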